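/- For all λ > 0: (1) the ratio h ↦ f_{R₁}(h)/f_{H_V}(h) = (2λ²π²h³e^{−λπh²})/(4πλ^{3/2}h²e^{−λπh²}) is strictly increasing on (0,∞), and the ratio h ↦ f_{H_{I'}}(h)/f_{H_I}(h) = ((8/3)π²λ^{5/2}h⁴e^{−λπh²})/(4πλ^{3/2}h²e^{−λπh²}) is strictly increasing on (0,∞); (2) consequently, for all t ≥ 0, ∫_t^∞ 2λ²π²h³e^{−λπh²} dh ≥ ∫_t^∞ 4πλ^{3/2}h²e^{−λπh²} dh and ∫_t^∞ (8/3)π²λ^{5/2}h⁴e^{−λπh²} dh ≥ ∫_t^∞ 4πλ^{3/2}h²e^{−λπh²} dh. That is, H_V ≤_{lrd} R₁ and H_I ≤_{lrd} H_{I'}, and these likelihood-ratio dominations imply the stochastic dominations H_V ≤_{st} R₁ and H_I ≤_{st} H_{I'}. -/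

import Mathlib

open MeasureTheory Set
set_option maxHeartbeats 800000

private lemma base_integrableOn {b : ℝ} (hb : 0 < b) (n : ℕ) {t : ℝ} (ht : 0 ≤ t) :
    IntegrableOn (fun x : ℝ => x ^ n * Real.exp (-(b * x ^ 2))) (Ioi t) := by
  have h := integrableOn_rpow_mul_exp_neg_mul_sq hb (s := (n : ℝ))
    (lt_of_lt_of_le neg_one_lt_zero (Nat.cast_nonneg n))
  have he : (fun x : ℝ => x ^ ((n : ℝ)) * Real.exp (-b * x ^ 2))
      = fun x : ℝ => x ^ n * Real.exp (-(b * x ^ 2)) := by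
    funext x; rw [Real.rpow_natCast, neg_mul]
  rw [he] at h
  exact h.mono_set (Ioi_subset_Ioi ht)

private lemma base_moment {b : ℝ} (hb : 0 < b) (n : ℕ) :
    ∫ x in Ioi (0:ℝ), x ^ n * Real.exp (-(b * x ^ 2)) =
      b ^ (-((n:ℝ) + 1) / 2) * (1 / 2) * Real.Gamma (((n:ℝ) + 1) / 2) := by
  rw [← integral_rpow_mul_exp_neg_mul_rpow (p := 2) (q := (n:ℝ)) two_pos
    (lt_of_lt_of_le neg_one_lt_zero (Nat.cast_nonneg n)) hb]
  refine setIntegral_congr_fun measurableSet_Ioi fun x hx => ?_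
  rw [Real.rpow_natCast]
  norm_num

private lemma gamma32 : Real.Gamma ((3:ℝ)/2) = Real.sqrt Real.pi / 2 := by
  have h : ((3:ℝ)/2) = 1/2 + 1 := by norm_num
  rw [h, Real.Gamma_add_one (by norm_num), Real.Gamma_one_half_eq]
  ring

private lemma gamma52 : Real.Gamma ((5:ℝ)/2) = 3 * Real.sqrt Real.pi / 4 := by
  have h : ((5:ℝ)/2) = 3/2 + 1 := by norm_num
  rw [h, Real.Gamma_add_one (by norm_num), gamma32]
  ring

private lemma moment2 {b : ℝ} (hb : 0 < b) :
    ∫ x in Ioi (0:ℝ), x ^ 2 * Real.exp (-(b * x ^ 2)) =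
      (b ^ ((3:ℝ)/2))⁻¹ * (Real.sqrt Real.pi / 4) := by
  rw [base_moment hb 2]
  norm_num
  rw [Real.rpow_neg hb.le, gamma32]
  ring

private lemma moment3 {b : ℝ} (hb : 0 < b) :
    ∫ x in Ioi (0:ℝ), x ^ 3 * Real.exp (-(b * x ^ 2)) = (b ^ 2)⁻¹ * (1/2) := by
  rw [base_moment hb 3]
  norm_num

private lemma moment4 {b : ℝ} (hb : 0 < b) :
    ∫ x in Ioi (0:ℝ), x ^ 4 * Real.exp (-(b * x ^ 2)) =
      (b ^ ((5:ℝ)/2))⁻¹ * (3 * Real.sqrt Real.pi / 8) := by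
  rw [base_moment hb 4]
  norm_num
  rw [Real.rpow_neg hb.le, gamma52]
  ring

private lemma tail_ge {f g : ℝ → ℝ} (hf : IntegrableOn f (Ioi 0)) (hg : IntegrableOn g (Ioi 0))
    (htot : ∫ x in Ioi (0:ℝ), f x = ∫ x in Ioi (0:ℝ), g x) (c : ℝ)
    (hle : ∀ x, 0 < x → x ≤ c → g x ≤ f x) (hge : ∀ x, c ≤ x → f x ≤ g x)
    {t : ℝ} (ht : 0 ≤ t) : (∫ x in Ioi t, f x) ≤ ∫ x in Ioi t, g x := by
  have hft : IntegrableOn f (Ioi t) := hf.mono_set (Ioi_subset_Ioi ht)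
  have hgt : IntegrableOn g (Ioi t) := hg.mono_set (Ioi_subset_Ioi ht)
  rcases le_or_gt c t with h | h
  · exact setIntegral_mono_on hft hgt measurableSet_Ioi
      fun x hx => hge x (h.trans (le_of_lt hx))
  · have hfm : IntegrableOn f (Ioc 0 t) := hf.mono_set Ioc_subset_Ioi_self
    have hgm : IntegrableOn g (Ioc 0 t) := hg.mono_set Ioc_subset_Ioi_self
    have hd : Disjoint (Ioc 0 t) (Ioi t) := Ioc_disjoint_Ioi le_rfl
    have hu : Ioc (0:ℝ) t ∪ Ioi t = Ioi 0 := Ioc_union_Ioi_eq_Ioi ht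
    have hsf : (∫ x in Ioc (0:ℝ) t, f x) + ∫ x in Ioi t, f x = ∫ x in Ioi (0:ℝ), f x := by
      rw [← hu]; exact (setIntegral_union hd measurableSet_Ioi hfm hft).symm
    have hsg : (∫ x in Ioc (0:ℝ) t, g x) + ∫ x in Ioi t, g x = ∫ x in Ioi (0:ℝ), g x := by
      rw [← hu]; exact (setIntegral_union hd measurableSet_Ioi hgm hgt).symm
    have hIoc : ∫ x in Ioc (0:ℝ) t, g x ≤ ∫ x in Ioc (0:ℝ) t, f x :=
      setIntegral_mono_on hgm hfm measurableSet_Ioc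
        fun x hx => hle x hx.1 (hx.2.trans h.le)
    linarith

theorem stmt_16 (lam : ℝ) (hlam : 0 < lam) :
    StrictMonoOn (fun h : ℝ =>
        2 * lam ^ 2 * Real.pi ^ 2 * h ^ 3 * Real.exp (-(lam * Real.pi * h ^ 2)) /
          (4 * Real.pi * lam ^ ((3:ℝ)/2) * h ^ 2 * Real.exp (-(lam * Real.pi * h ^ 2))))
      (Ioi 0) ∧
    StrictMonoOn (fun h : ℝ =>
        8/3 * Real.pi ^ 2 * lam ^ ((5:ℝ)/2) * h ^ 4 * Real.exp (-(lam * Real.pi * h ^ 2)) /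
          (4 * Real.pi * lam ^ ((3:ℝ)/2) * h ^ 2 * Real.exp (-(lam * Real.pi * h ^ 2))))
      (Ioi 0) ∧
    (∀ t : ℝ, 0 ≤ t →
      (∫ h in Ioi t, 2 * lam ^ 2 * Real.pi ^ 2 * h ^ 3 * Real.exp (-(lam * Real.pi * h ^ 2))) ≥
        ∫ h in Ioi t,
          4 * Real.pi * lam ^ ((3:ℝ)/2) * h ^ 2 * Real.exp (-(lam * Real.pi * h ^ 2))) ∧
    ∀ t : ℝ, 0 ≤ t →
      (∫ h in Ioi t,
          8/3 * Real.pi ^ 2 * lam ^ ((5:ℝ)/2) * h ^ 4 * Real.exp (-(lam * Real.pi * h ^ 2))) ≥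
        ∫ h in Ioi t,
          4 * Real.pi * lam ^ ((3:ℝ)/2) * h ^ 2 * Real.exp (-(lam * Real.pi * h ^ 2)) := by
  have hpi := Real.pi_pos
  set s : ℝ := lam ^ ((1:ℝ)/2) with hs_def
  have hs : 0 < s := Real.rpow_pos_of_pos hlam _
  set p : ℝ := Real.sqrt Real.pi with hp_def
  have hp : 0 < p := Real.sqrt_pos.mpr hpi
  have hpp : Real.pi = p ^ 2 := (Real.sq_sqrt hpi.le).symm
  have hlam_s : lam = s ^ 2 := by
    rw [hs_def, ← Real.rpow_natCast (lam ^ ((1:ℝ)/2)) 2, ← Real.rpow_mul hlam.le]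
    norm_num
  have h32 : lam ^ ((3:ℝ)/2) = s ^ 3 := by
    rw [hs_def, ← Real.rpow_natCast (lam ^ ((1:ℝ)/2)) 3, ← Real.rpow_mul hlam.le]
    norm_num
  have h52 : lam ^ ((5:ℝ)/2) = s ^ 5 := by
    rw [hs_def, ← Real.rpow_natCast (lam ^ ((1:ℝ)/2)) 5, ← Real.rpow_mul hlam.le]
    norm_num
  have ha : 0 < lam * Real.pi := mul_pos hlam hpi
  -- rpow of the product base
  have hbase32 : (lam * Real.pi) ^ ((3:ℝ)/2) = s ^ 3 * (Real.pi * p) := by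
    rw [Real.mul_rpow hlam.le hpi.le, h32]
    congr 1
    rw [show ((3:ℝ)/2) = 1 + 1/2 by norm_num, Real.rpow_add hpi, Real.rpow_one,
      hp_def, Real.sqrt_eq_rpow]
  have hbase52 : (lam * Real.pi) ^ ((5:ℝ)/2) = s ^ 5 * (Real.pi ^ 2 * p) := by
    rw [Real.mul_rpow hlam.le hpi.le, h52]
    congr 1
    rw [show ((5:ℝ)/2) = 2 + 1/2 by norm_num, Real.rpow_add hpi, hp_def,
      Real.sqrt_eq_rpow, ← Real.rpow_natCast Real.pi 2]
    norm_num
  -- names for the three densities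
  set fHV : ℝ → ℝ := fun h =>
    4 * Real.pi * lam ^ ((3:ℝ)/2) * h ^ 2 * Real.exp (-(lam * Real.pi * h ^ 2)) with hfHV
  set fR1 : ℝ → ℝ := fun h =>
    2 * lam ^ 2 * Real.pi ^ 2 * h ^ 3 * Real.exp (-(lam * Real.pi * h ^ 2)) with hfR1
  set fI : ℝ → ℝ := fun h =>
    8/3 * Real.pi ^ 2 * lam ^ ((5:ℝ)/2) * h ^ 4 * Real.exp (-(lam * Real.pi * h ^ 2)) with hfI
  have eqHV : fHV = fun h : ℝ => (4 * Real.pi * lam ^ ((3:ℝ)/2)) *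
      (h ^ 2 * Real.exp (-(lam * Real.pi * h ^ 2))) := by
    funext h; simp only [hfHV]; ring
  have eqR1 : fR1 = fun h : ℝ => (2 * lam ^ 2 * Real.pi ^ 2) *
      (h ^ 3 * Real.exp (-(lam * Real.pi * h ^ 2))) := by
    funext h; simp only [hfR1]; ring
  have eqI : fI = fun h : ℝ => (8/3 * Real.pi ^ 2 * lam ^ ((5:ℝ)/2)) *
      (h ^ 4 * Real.exp (-(lam * Real.pi * h ^ 2))) := by
    funext h; simp only [hfI]; ring
  have hintHV : IntegrableOn fHV (Ioi 0) := by
    rw [eqHV]; exact (base_integrableOn ha 2 le_rfl).const_mul _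
  have hintR1 : IntegrableOn fR1 (Ioi 0) := by
    rw [eqR1]; exact (base_integrableOn ha 3 le_rfl).const_mul _
  have hintI : IntegrableOn fI (Ioi 0) := by
    rw [eqI]; exact (base_integrableOn ha 4 le_rfl).const_mul _
  -- total masses
  have massHV : ∫ x in Ioi (0:ℝ), fHV x = 1 := by
    rw [eqHV]
    rw [MeasureTheory.integral_const_mul, moment2 ha, hbase32, h32, hpp, Real.sqrt_sq hp.le]
    have hs3 : s ^ 3 ≠ 0 := by positivity
    have hp0 : p ≠ 0 := ne_of_gt hp
    field_simp
  have massR1 : ∫ x in Ioi (0:ℝ), fR1 x = 1 := by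
    rw [eqR1]
    rw [MeasureTheory.integral_const_mul, moment3 ha]
    have : (lam * Real.pi) ^ 2 ≠ 0 := by positivity
    field_simp
  have massI : ∫ x in Ioi (0:ℝ), fI x = 1 := by
    rw [eqI]
    rw [MeasureTheory.integral_const_mul, moment4 ha, hbase52, h52, hpp, Real.sqrt_sq hp.le]
    have hs5 : s ^ 5 ≠ 0 := by positivity
    have hp0 : p ≠ 0 := ne_of_gt hp
    field_simp
  -- pointwise comparisons
  have hle1 : ∀ x : ℝ, 0 < x → x ≤ 2 / (Real.pi * s) → fR1 x ≤ fHV x := by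
    intro x hx hxc
    have hps : (0:ℝ) < Real.pi * s := by positivity
    have h2 : Real.pi * s * x ≤ 2 := by
      calc Real.pi * s * x ≤ Real.pi * s * (2 / (Real.pi * s)) :=
            mul_le_mul_of_nonneg_left hxc hps.le
        _ = 2 := by field_simp
    have he : 0 < Real.exp (-(lam * Real.pi * x ^ 2)) := Real.exp_pos _
    have hl2 : lam ^ 2 = s ^ 4 := by rw [hlam_s]; ring
    simp only [hfR1, hfHV]
    rw [h32, hl2]
    nlinarith [mul_le_mul_of_nonneg_right h2
      (show (0:ℝ) ≤ 2 * Real.pi * s ^ 3 * x ^ 2 * Real.exp (-(lam * Real.pi * x ^ 2)) by positivity)]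
  have hge1 : ∀ x : ℝ, 2 / (Real.pi * s) ≤ x → fHV x ≤ fR1 x := by
    intro x hxc
    have hx : 0 < x := lt_of_lt_of_le (by positivity) hxc
    have hps : (0:ℝ) < Real.pi * s := by positivity
    have h2 : 2 ≤ Real.pi * s * x := by
      rw [div_le_iff₀ hps] at hxc; linarith [hxc]
    have he : 0 < Real.exp (-(lam * Real.pi * x ^ 2)) := Real.exp_pos _
    have hl2 : lam ^ 2 = s ^ 4 := by rw [hlam_s]; ring
    simp only [hfR1, hfHV]
    rw [h32, hl2]
    nlinarith [mul_le_mul_of_nonneg_right h2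
      (show (0:ℝ) ≤ 2 * Real.pi * s ^ 3 * x ^ 2 * Real.exp (-(lam * Real.pi * x ^ 2)) by positivity)]
  have hle2 : ∀ x : ℝ, 0 < x → x ≤ Real.sqrt (3 / (2 * Real.pi * lam)) → fI x ≤ fHV x := by
    intro x hx hxc
    have h2 : 2 * Real.pi * lam * x ^ 2 ≤ 3 := by
      have hsq := Real.sq_sqrt (show (0:ℝ) ≤ 3 / (2 * Real.pi * lam) by positivity)
      have h1 : x ^ 2 ≤ 3 / (2 * Real.pi * lam) := by
        nlinarith [hxc, Real.sqrt_nonneg (3 / (2 * Real.pi * lam)), hx.le]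
      have h3 : (2 * Real.pi * lam) * (3 / (2 * Real.pi * lam)) = 3 := by field_simp
      nlinarith [mul_le_mul_of_nonneg_left h1
        (show (0:ℝ) ≤ 2 * Real.pi * lam by positivity)]
    have he : 0 < Real.exp (-(lam * Real.pi * x ^ 2)) := Real.exp_pos _
    have h2' : 2 * Real.pi * s ^ 2 * x ^ 2 ≤ 3 := by rw [← hlam_s]; linarith
    simp only [hfI, hfHV]
    rw [h32, h52]
    nlinarith [mul_le_mul_of_nonneg_right h2'
      (show (0:ℝ) ≤ 4/3 * Real.pi * s ^ 3 * x ^ 2 * Real.exp (-(lam * Real.pi * x ^ 2)) by positivity)]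
  have hge2 : ∀ x : ℝ, Real.sqrt (3 / (2 * Real.pi * lam)) ≤ x → fHV x ≤ fI x := by
    intro x hxc
    have hx : 0 < x := lt_of_lt_of_le (Real.sqrt_pos.mpr (by positivity)) hxc
    have h2 : 3 ≤ 2 * Real.pi * lam * x ^ 2 := by
      have hsq := Real.sq_sqrt (show (0:ℝ) ≤ 3 / (2 * Real.pi * lam) by positivity)
      have hx2 : 3 / (2 * Real.pi * lam) ≤ x ^ 2 := by
        nlinarith [Real.sqrt_nonneg (3 / (2 * Real.pi * lam))]
      have h3 : (2 * Real.pi * lam) * (3 / (2 * Real.pi * lam)) = 3 := by field_simp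
      nlinarith [mul_le_mul_of_nonneg_left hx2
        (show (0:ℝ) ≤ 2 * Real.pi * lam by positivity)]
    have he : 0 < Real.exp (-(lam * Real.pi * x ^ 2)) := Real.exp_pos _
    have h2' : (3:ℝ) ≤ 2 * Real.pi * s ^ 2 * x ^ 2 := by rw [← hlam_s]; linarith
    simp only [hfI, hfHV]
    rw [h32, h52]
    nlinarith [mul_le_mul_of_nonneg_right h2'
      (show (0:ℝ) ≤ 4/3 * Real.pi * s ^ 3 * x ^ 2 * Real.exp (-(lam * Real.pi * x ^ 2)) by positivity)]
  -- strict monotonicity of the ratios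
  have ratio1 : ∀ x : ℝ, 0 < x → fR1 x / fHV x = (Real.pi * s / 2) * x := by
    intro x hx
    have he : Real.exp (-(lam * Real.pi * x ^ 2)) ≠ 0 := Real.exp_ne_zero _
    have hx2 : x ^ 2 ≠ 0 := by positivity
    have hl2 : lam ^ 2 = s ^ 4 := by rw [hlam_s]; ring
    simp only [hfR1, hfHV]
    rw [h32, hl2]
    field_simp
    ring
  have ratio2 : ∀ x : ℝ, 0 < x → fI x / fHV x = (2/3 * Real.pi * s ^ 2) * x ^ 2 := by
    intro x hx
    have he : Real.exp (-(lam * Real.pi * x ^ 2)) ≠ 0 := Real.exp_ne_zero _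
    have hx2 : x ^ 2 ≠ 0 := by positivity
    simp only [hfI, hfHV]
    rw [h32, h52]
    field_simp
    ring
  refine ⟨?_, ?_, ?_, ?_⟩
  · intro x hx y hy hxy
    simp only [mem_Ioi] at hx hy
    show fR1 x / fHV x < fR1 y / fHV y
    rw [ratio1 x hx, ratio1 y hy]
    have hc : 0 < Real.pi * s / 2 := by positivity
    exact mul_lt_mul_of_pos_left hxy hc
  · intro x hx y hy hxy
    simp only [mem_Ioi] at hx hy
    show fI x / fHV x < fI y / fHV y
    rw [ratio2 x hx, ratio2 y hy]
    have hc : 0 < 2/3 * Real.pi * s ^ 2 := by positivity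
    have : x ^ 2 < y ^ 2 := by nlinarith
    exact mul_lt_mul_of_pos_left this hc
  · intro t ht
    exact tail_ge hintHV hintR1 (by rw [massHV, massR1]) (2 / (Real.pi * s)) hle1 hge1 ht
  · intro t ht
    exact tail_ge hintHV hintI (by rw [massHV, massI]) (Real.sqrt (3 / (2 * Real.pi * lam)))
      hle2 hge2 ht
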